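/- arXiv:1101.3773 — 4 statements merged into one kernel-verified Lean document; each statement's English description precedes it below -/
import Mathlib

section
/- Let W = {(x,y,z) ∈ ℝ³ : x ≤ 0, y ≤ 0, z ≤ 0} and let W' = {(x,y) ∈ ℝ² : x ≤ 0, y ≤ 0}. Let P = {p₁, …, p_n} be a finite set of points in ℝ³ such that no real number occurs twice among all the coordinates of the points of P, indexed so that the z-coordinates satisfy z(p₁) < z(p₂) < ⋯ < z(p_n). Let p_t' ∈ ℝ² denote the projection of p_t onto the z = 0 plane and let P_t' = {p₁', …, p_t'}. Then the following two assertions are equivalent: (i) there exists a two-coloring of {p₁', …, p_n'} such that for every t ≤ n and every translate of W' that contains at least 12 points of P_t', that translate contains points of both colors among P_t'; (ii) there exists a two-coloring of P such that every translate of W that contains at least 12 points of P contains points of both colors. -/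
private lemma exists_cut {n : ℕ} (f : Fin n → ℝ) (hf : StrictMono f) (c : ℝ) :
    ∃ t ≤ n, ∀ i : Fin n, i.val < t ↔ f i ≤ c := by
  by_cases h : (Finset.univ.filter fun i : Fin n => f i ≤ c).Nonempty
  · set S := Finset.univ.filter fun i : Fin n => f i ≤ c with hS
    refine ⟨(S.max' h).val + 1, by have := (S.max' h).isLt; omega, fun i => ?_⟩
    have hm : f (S.max' h) ≤ c := by
      have := S.max'_mem h
      simp [hS] at this; exact this
    constructor
    · intro hi
      have hle : i ≤ S.max' h := by
        rw [Fin.le_def]; omega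
      exact le_trans (hf.monotone hle) hm
    · intro hfi
      have : i ∈ S := by simp [hS, hfi]
      have := S.le_max' i this
      rw [Fin.le_def] at this; omega
  · refine ⟨0, Nat.zero_le n, fun i => ?_⟩
    simp only [Nat.not_lt_zero, false_iff]
    intro hfi
    exact h ⟨i, by simp [hfi]⟩

/-- Reduction of the spatial octant coloring problem to a planar one: for a finite
point set in ℝ³ with pairwise distinct coordinate values, indexed in increasing order
of z-coordinates, a good two-coloring of the projections (good for every prefix, with
respect to translates of the quadrant `W'`) exists if and only if a good two-coloring
of the spatial set (with respect to translates of the octant `W`) exists. -/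
theorem octant_projection_equivalence
    (W : Set (Fin 3 → ℝ)) (hW : W = {q | q 0 ≤ 0 ∧ q 1 ≤ 0 ∧ q 2 ≤ 0})
    (W' : Set (Fin 2 → ℝ)) (hW' : W' = {q | q 0 ≤ 0 ∧ q 1 ≤ 0})
    (n : ℕ) (p : Fin n → (Fin 3 → ℝ))
    (hdist : Function.Injective (fun q : Fin n × Fin 3 => p q.1 q.2))
    (hz : ∀ i j : Fin n, i < j → p i 2 < p j 2) :
    (∃ χ : Fin n → Bool, ∀ t : ℕ, t ≤ n → ∀ v : Fin 2 → ℝ,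
        12 ≤ {i : Fin n | i.val < t ∧ ![p i 0, p i 1] ∈ (v + ·) '' W'}.ncard →
        (∃ i : Fin n, i.val < t ∧ ![p i 0, p i 1] ∈ (v + ·) '' W' ∧ χ i = true) ∧
        (∃ j : Fin n, j.val < t ∧ ![p j 0, p j 1] ∈ (v + ·) '' W' ∧ χ j = false))
    ↔
    (∃ χ : Fin n → Bool, ∀ v : Fin 3 → ℝ,
        12 ≤ {i : Fin n | p i ∈ (v + ·) '' W}.ncard →
        (∃ i : Fin n, p i ∈ (v + ·) '' W ∧ χ i = true) ∧
        (∃ j : Fin n, p j ∈ (v + ·) '' W ∧ χ j = false)) := by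
  subst hW hW'
  have hsm : StrictMono fun i : Fin n => p i 2 := fun i j h => hz i j h
  have mem2 : ∀ (v : Fin 2 → ℝ) (i : Fin n),
      (![p i 0, p i 1] ∈ (v + ·) '' {q : Fin 2 → ℝ | q 0 ≤ 0 ∧ q 1 ≤ 0}) ↔
      (p i 0 ≤ v 0 ∧ p i 1 ≤ v 1) := by
    intro v i
    constructor
    · rintro ⟨w, ⟨h0, h1⟩, hw⟩
      have e0 := congrFun hw 0
      have e1 := congrFun hw 1
      simp at e0 e1
      constructor <;> linarith
    · rintro ⟨h0, h1⟩
      refine ⟨![p i 0, p i 1] - v, ⟨by simpa using h0, by simpa using h1⟩, by ring⟩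
  have mem3 : ∀ (v : Fin 3 → ℝ) (i : Fin n),
      (p i ∈ (v + ·) '' {q : Fin 3 → ℝ | q 0 ≤ 0 ∧ q 1 ≤ 0 ∧ q 2 ≤ 0}) ↔
      (p i 0 ≤ v 0 ∧ p i 1 ≤ v 1 ∧ p i 2 ≤ v 2) := by
    intro v i
    constructor
    · rintro ⟨w, ⟨h0, h1, h2⟩, hw⟩
      have e0 := congrFun hw 0
      have e1 := congrFun hw 1
      have e2 := congrFun hw 2
      simp at e0 e1 e2
      refine ⟨by linarith, by linarith, by linarith⟩
    · rintro ⟨h0, h1, h2⟩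
      refine ⟨p i - v, ⟨by simpa using h0, by simpa using h1, by simpa using h2⟩, by ring⟩
  constructor
  · rintro ⟨χ, hχ⟩
    refine ⟨χ, fun v hcard => ?_⟩
    obtain ⟨t, ht, hcut⟩ := exists_cut _ hsm (v 2)
    have hiff : ∀ i : Fin n,
        (p i ∈ (v + ·) '' {q : Fin 3 → ℝ | q 0 ≤ 0 ∧ q 1 ≤ 0 ∧ q 2 ≤ 0}) ↔
        (i.val < t ∧ ![p i 0, p i 1] ∈ ((![v 0, v 1] : Fin 2 → ℝ) + ·) ''
          {q : Fin 2 → ℝ | q 0 ≤ 0 ∧ q 1 ≤ 0}) := by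
      intro i
      rw [mem3, mem2, hcut i]
      simp
      tauto
    have hset : {i : Fin n | p i ∈ (v + ·) '' {q : Fin 3 → ℝ | q 0 ≤ 0 ∧ q 1 ≤ 0 ∧ q 2 ≤ 0}}
        = {i : Fin n | i.val < t ∧ ![p i 0, p i 1] ∈ ((![v 0, v 1] : Fin 2 → ℝ) + ·) ''
          {q : Fin 2 → ℝ | q 0 ≤ 0 ∧ q 1 ≤ 0}} := Set.ext fun i => hiff i
    rw [hset] at hcard
    obtain ⟨⟨i, hi1, hi2, hi3⟩, ⟨j, hj1, hj2, hj3⟩⟩ := hχ t ht ![v 0, v 1] hcard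
    exact ⟨⟨i, (hiff i).2 ⟨hi1, hi2⟩, hi3⟩, ⟨j, (hiff j).2 ⟨hj1, hj2⟩, hj3⟩⟩
  · rintro ⟨χ, hχ⟩
    refine ⟨χ, fun t ht v hcard => ?_⟩
    rcases Nat.eq_zero_or_pos t with rfl | htpos
    · simp at hcard
    have htn : t - 1 < n := by clear hcard; omega
    set k : Fin n := ⟨t - 1, htn⟩ with hk
    have hcut : ∀ i : Fin n, i.val < t ↔ p i 2 ≤ p k 2 := by
      intro i
      rw [hsm.le_iff_le, Fin.le_def]
      simp [hk]
      clear hcard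
      omega
    have hiff : ∀ i : Fin n,
        (i.val < t ∧ ![p i 0, p i 1] ∈ (v + ·) '' {q : Fin 2 → ℝ | q 0 ≤ 0 ∧ q 1 ≤ 0}) ↔
        (p i ∈ ((![v 0, v 1, p k 2] : Fin 3 → ℝ) + ·) ''
          {q : Fin 3 → ℝ | q 0 ≤ 0 ∧ q 1 ≤ 0 ∧ q 2 ≤ 0}) := by
      intro i
      rw [mem3, mem2, hcut i]
      simp
      tauto
    have hset : {i : Fin n | i.val < t ∧ ![p i 0, p i 1] ∈ (v + ·) ''
          {q : Fin 2 → ℝ | q 0 ≤ 0 ∧ q 1 ≤ 0}}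
        = {i : Fin n | p i ∈ ((![v 0, v 1, p k 2] : Fin 3 → ℝ) + ·) ''
          {q : Fin 3 → ℝ | q 0 ≤ 0 ∧ q 1 ≤ 0 ∧ q 2 ≤ 0}} := Set.ext fun i => hiff i
    rw [hset] at hcard
    obtain ⟨⟨i, hi2, hi3⟩, ⟨j, hj2, hj3⟩⟩ := hχ ![v 0, v 1, p k 2] hcard
    obtain ⟨hi1, hi2'⟩ := (hiff i).2 hi2
    obtain ⟨hj1, hj2'⟩ := (hiff j).2 hj2
    exact ⟨⟨i, hi1, hi2', hi3⟩, ⟨j, hj1, hj2', hj3⟩⟩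
end

section
/- Let W = {(x,y,z) ∈ ℝ³ : x ≤ 0, y ≤ 0, z ≤ 0}. Let P be a finite set of points in ℝ³ such that any two distinct points of P are incomparable in their first two coordinates, i.e., for all distinct p, q ∈ P, either (p's x-coordinate < q's x-coordinate and p's y-coordinate > q's y-coordinate) or (p's x-coordinate > q's x-coordinate and p's y-coordinate < q's y-coordinate). Then there exists a coloring χ : P → {red, blue} such that every translate t + W of W that contains at least 4 points of P contains at least one red point and at least one blue point of P. -/
namespace OctantAux

variable {α : Type*} [DecidableEq α]


/-- Consecutive colored points (no colored point strictly between) get different colors. -/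
def Alt (x : α → ℝ) (S : Finset α) (χ : α → Option Bool) : Prop :=
  ∀ p ∈ S, ∀ q ∈ S, x p < x q →
    (∀ r ∈ S, x p < x r → x r < x q → χ r = none) →
    ∀ bp bq, χ p = some bp → χ q = some bq → bp ≠ bq

/-- Two uncolored points always have a colored point strictly between them. -/
def Sep (x : α → ℝ) (S : Finset α) (χ : α → Option Bool) : Prop :=
  ∀ p ∈ S, ∀ q ∈ S, x p < x q → χ p = none → χ q = none →
    ∃ r ∈ S, x p < x r ∧ x r < x q ∧ χ r ≠ none

lemma good_of_inv (x : α → ℝ) (S : Finset α) (χ : α → Option Bool)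
    (h1 : Alt x S χ) (h2 : Sep x S χ)
    {a b c d : α} (ha : a ∈ S) (hb : b ∈ S) (hc : c ∈ S) (hd : d ∈ S)
    (hab : x a < x b) (hbc : x b < x c) (hcd : x c < x d)
    (hcons : ∀ e ∈ S, x a < x e → x e < x d → e = b ∨ e = c) :
    (∃ u, (u = a ∨ u = b ∨ u = c ∨ u = d) ∧ χ u = some true) ∧
    (∃ v, (v = a ∨ v = b ∨ v = c ∨ v = d) ∧ χ v = some false) := by
  have mk : ∀ u v : α, (u = a ∨ u = b ∨ u = c ∨ u = d) → (v = a ∨ v = b ∨ v = c ∨ v = d) →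
      ∀ β γ : Bool, χ u = some β → χ v = some γ → β ≠ γ →
      (∃ u, (u = a ∨ u = b ∨ u = c ∨ u = d) ∧ χ u = some true) ∧
      (∃ v, (v = a ∨ v = b ∨ v = c ∨ v = d) ∧ χ v = some false) := by
    intro u v hu hv β γ hβ hγ hne
    cases β
    · cases γ
      · exact absurd rfl hne
      · exact ⟨⟨v, hv, hγ⟩, ⟨u, hu, hβ⟩⟩
    · cases γ
      · exact ⟨⟨u, hu, hβ⟩, ⟨v, hv, hγ⟩⟩
      · exact absurd rfl hne
  cases hcb : χ b with
  | some bb =>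
    cases hcc : χ c with
    | some bc =>
      refine mk b c (by tauto) (by tauto) bb bc hcb hcc ?_
      refine h1 b hb c hc hbc ?_ bb bc hcb hcc
      intro r hr hr1 hr2
      rcases hcons r hr (hab.trans hr1) (hr2.trans hcd) with rfl | rfl
      · exact absurd hr1 (lt_irrefl _)
      · exact absurd hr2 (lt_irrefl _)
    | none =>
      cases hcdd : χ d with
      | some bd =>
        refine mk b d (by tauto) (by tauto) bb bd hcb hcdd ?_
        refine h1 b hb d hd (hbc.trans hcd) ?_ bb bd hcb hcdd
        intro r hr hr1 hr2
        rcases hcons r hr (hab.trans hr1) hr2 with rfl | rfl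
        · exact absurd hr1 (lt_irrefl _)
        · exact hcc
      | none =>
        obtain ⟨r, hrS, hr1, hr2, hr3⟩ := h2 c hc d hd hcd hcc hcdd
        rcases hcons r hrS (hab.trans (hbc.trans hr1)) hr2 with rfl | rfl
        · exact absurd (hbc.trans hr1) (lt_irrefl _)
        · exact absurd hr1 (lt_irrefl _)
  | none =>
    cases hcc : χ c with
    | some bc =>
      cases hca : χ a with
      | some ba =>
        refine mk a c (by tauto) (by tauto) ba bc hca hcc ?_
        refine h1 a ha c hc (hab.trans hbc) ?_ ba bc hca hcc
        intro r hr hr1 hr2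
        rcases hcons r hr hr1 (hr2.trans hcd) with rfl | rfl
        · exact hcb
        · exact absurd hr2 (lt_irrefl _)
      | none =>
        obtain ⟨r, hrS, hr1, hr2, hr3⟩ := h2 a ha b hb hab hca hcb
        rcases hcons r hrS hr1 ((hr2.trans hbc).trans hcd) with rfl | rfl
        · exact absurd hr2 (lt_irrefl _)
        · exact absurd (hr2.trans hbc) (lt_irrefl _)
    | none =>
      obtain ⟨r, hrS, hr1, hr2, hr3⟩ := h2 b hb c hc hbc hcb hcc
      rcases hcons r hrS (hab.trans hr1) (hr2.trans hcd) with rfl | rfl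
      · exact absurd hr1 (lt_irrefl _)
      · exact absurd hr2 (lt_irrefl _)

lemma pair_insert (x : α → ℝ) (T : Finset α) (hx : Set.InjOn x ↑T)
    (χ' : α → Option Bool) (a b : α) (ha : a ∈ T) (hb : b ∈ T) (hab : x a < x b)
    (hfree : ∀ r ∈ T, ¬(x a < x r ∧ x r < x b))
    (h1 : Alt x ((T.erase a).erase b) χ') (h2 : Sep x ((T.erase a).erase b) χ') :
    ∃ χ : α → Option Bool, (∀ p, p ≠ a → p ≠ b → χ p = χ' p) ∧
      Alt x T χ ∧ Sep x T χ := by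
  classical
  set T₀ := (T.erase a).erase b with hT₀
  have hT₀sub : T₀ ⊆ T := fun r hr => Finset.mem_of_mem_erase (Finset.mem_of_mem_erase hr)
  have hmemT₀ : ∀ {r}, r ∈ T₀ ↔ r ≠ b ∧ r ≠ a ∧ r ∈ T := by
    intro r
    simp [hT₀, Finset.mem_erase, and_assoc]
  have hne_ab : a ≠ b := fun h => absurd (h ▸ hab) (lt_irrefl _)
  -- choose the color for a
  obtain ⟨cA, hN1, hN2⟩ :
      ∃ cA : Bool,
        (∀ p ∈ T₀, ∀ c : Bool, χ' p = some c → x p < x a →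
          (∀ r ∈ T₀, x p < x r → x r < x a → χ' r = none) → c ≠ cA) ∧
        (∀ p ∈ T₀, ∀ c : Bool, χ' p = some c → x b < x p →
          (∀ r ∈ T₀, x b < x r → x r < x p → χ' r = none) → c ≠ !cA) := by
    by_cases hL : ∃ p ∈ T₀, (χ' p).isSome ∧ x p < x a
    · obtain ⟨l, hl, hlmax⟩ :=
        Finset.exists_max_image (T₀.filter (fun p => (χ' p).isSome ∧ x p < x a)) x
          (by obtain ⟨p, hp, h⟩ := hL; exact ⟨p, Finset.mem_filter.mpr ⟨hp, h⟩⟩)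
      obtain ⟨hlT₀, hlsome, hlxa⟩ : l ∈ T₀ ∧ (χ' l).isSome ∧ x l < x a := by
        have := Finset.mem_filter.mp hl; exact ⟨this.1, this.2.1, this.2.2⟩
      obtain ⟨cl, hcl⟩ := Option.isSome_iff_exists.mp hlsome
      refine ⟨!cl, ?_, ?_⟩
      · intro p hp c hc hpa hno
        rcases lt_trichotomy (x p) (x l) with h | h | h
        · exact absurd (hno l hlT₀ h hlxa) (by simp [hcl])
        · have hpl : p = l := hx (hT₀sub hp) (hT₀sub hlT₀) h
          subst hpl
          rw [hcl] at hc
          simp only [Option.some.injEq] at hc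
          subst hc
          simp
        · exact absurd (hlmax p (Finset.mem_filter.mpr ⟨hp, by simp [hc], hpa⟩)) (not_le.mpr h)
      · intro p hp c hc hbp hno
        simp only [Bool.not_not]
        have hlp : x l < x p := hlxa.trans (hab.trans hbp)
        have hkey : cl ≠ c := by
          refine h1 l hlT₀ p hp hlp ?_ cl c hcl hc
          intro r hr hr1 hr2
          rcases lt_trichotomy (x r) (x a) with h' | h' | h'
          · by_contra hcr
            have hrmem : r ∈ T₀.filter (fun p => (χ' p).isSome ∧ x p < x a) :=
              Finset.mem_filter.mpr ⟨hr, Option.ne_none_iff_isSome.mp hcr, h'⟩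
            exact absurd (hlmax r hrmem) (not_le.mpr hr1)
          · exact absurd (hx (hT₀sub hr) ha h') (hmemT₀.mp hr).2.1
          · rcases lt_trichotomy (x r) (x b) with h'' | h'' | h''
            · exact absurd ⟨h', h''⟩ (hfree r (hT₀sub hr))
            · exact absurd (hx (hT₀sub hr) hb h'') (hmemT₀.mp hr).1
            · exact hno r hr h'' hr2
        exact fun h => hkey (h ▸ rfl)
    · by_cases hR : ∃ p ∈ T₀, (χ' p).isSome ∧ x b < x p
      · obtain ⟨r₀, hr₀, hr₀min⟩ :=
          Finset.exists_min_image (T₀.filter (fun p => (χ' p).isSome ∧ x b < x p)) x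
            (by obtain ⟨p, hp, h⟩ := hR; exact ⟨p, Finset.mem_filter.mpr ⟨hp, h⟩⟩)
        obtain ⟨hrT₀, hrsome, hrxb⟩ : r₀ ∈ T₀ ∧ (χ' r₀).isSome ∧ x b < x r₀ := by
          have := Finset.mem_filter.mp hr₀; exact ⟨this.1, this.2.1, this.2.2⟩
        obtain ⟨cr, hcr⟩ := Option.isSome_iff_exists.mp hrsome
        refine ⟨cr, ?_, ?_⟩
        · intro p hp c hc hpa _
          exact absurd ⟨p, hp, by simp [hc], hpa⟩ hL
        · intro p hp c hc hbp hno
          rcases lt_trichotomy (x r₀) (x p) with h | h | h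
          · exact absurd (hno r₀ hrT₀ hrxb h) (by simp [hcr])
          · have hrp : r₀ = p := hx (hT₀sub hrT₀) (hT₀sub hp) h
            subst hrp
            rw [hcr] at hc
            simp only [Option.some.injEq] at hc
            subst hc
            simp
          · exact absurd (hr₀min p (Finset.mem_filter.mpr ⟨hp, by simp [hc], hbp⟩)) (not_le.mpr h)
      · refine ⟨true, ?_, ?_⟩
        · intro p hp c hc hpa _
          exact absurd ⟨p, hp, by simp [hc], hpa⟩ hL
        · intro p hp c hc hbp _
          exact absurd ⟨p, hp, by simp [hc], hbp⟩ hR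
  obtain ⟨χ, hχa, hχb, hχo⟩ :
      ∃ χ : α → Option Bool, χ a = some cA ∧ χ b = some (!cA) ∧
        ∀ p, p ≠ a → p ≠ b → χ p = χ' p :=
    ⟨fun p => if p = a then some cA else if p = b then some (!cA) else χ' p,
      by simp, by simp [Ne.symm hne_ab], fun p h h' => by simp [h, h']⟩
  refine ⟨χ, hχo, ?_, ?_⟩
  · -- Alt
    intro p hp q hq hpq hno bp bq hbp hbq
    by_cases hpa : p = a
    · subst p
      rw [hχa] at hbp
      injection hbp with hbp'
      subst hbp'
      by_cases hqb : q = b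
      · subst q
        rw [hχb] at hbq
        injection hbq with hbq'
        subst hbq'
        simp
      · exfalso
        rcases lt_trichotomy (x q) (x b) with h | h | h
        · exact absurd ⟨hpq, h⟩ (hfree q hq)
        · exact absurd (hx hq hb h) hqb
        · have hnb := hno b hb hab h
          rw [hχb] at hnb
          exact Option.some_ne_none _ hnb
    · by_cases hpb : p = b
      · subst p
        rw [hχb] at hbp
        injection hbp with hbp'
        subst hbp'
        have hqa : q ≠ a := by
          intro h; rw [h] at hpq; exact absurd (hab.trans hpq) (lt_irrefl _)
        have hqb : q ≠ b := fun h => absurd (h ▸ hpq) (lt_irrefl _)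
        rw [hχo q hqa hqb] at hbq
        have hqT₀ : q ∈ T₀ := hmemT₀.mpr ⟨hqb, hqa, hq⟩
        have hkey := hN2 q hqT₀ bq hbq hpq (fun r hr hr1 hr2 => by
          have hrb : r ≠ b := fun h => absurd (h ▸ hr1) (lt_irrefl _)
          have hra : r ≠ a := by
            intro h; rw [h] at hr1; exact absurd (hab.trans hr1) (lt_irrefl _)
          have hnr := hno r (hT₀sub hr) hr1 hr2
          rwa [hχo r hra hrb] at hnr)
        exact Ne.symm hkey
      · -- p ∉ {a,b}
        rw [hχo p hpa hpb] at hbp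
        by_cases hqa : q = a
        · subst q
          rw [hχa] at hbq
          injection hbq with hbq'
          subst hbq'
          have hpT₀ : p ∈ T₀ := hmemT₀.mpr ⟨hpb, hpa, hp⟩
          refine hN1 p hpT₀ bp hbp hpq (fun r hr hr1 hr2 => ?_)
          have hra : r ≠ a := fun h => absurd (h ▸ hr2) (lt_irrefl _)
          have hrb : r ≠ b := by
            intro h; rw [h] at hr2; exact absurd (hr2.trans hab) (lt_irrefl _)
          have hnr := hno r (hT₀sub hr) hr1 hr2
          rwa [hχo r hra hrb] at hnr
        · by_cases hqb : q = b
          · exfalso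
            subst q
            rcases lt_trichotomy (x p) (x a) with h | h | h
            · have hna := hno a ha h hab
              rw [hχa] at hna
              exact Option.some_ne_none _ hna
            · exact absurd (hx hp ha h) hpa
            · exact absurd ⟨h, hpq⟩ (hfree p hp)
          · rw [hχo q hqa hqb] at hbq
            have hpT₀ : p ∈ T₀ := hmemT₀.mpr ⟨hpb, hpa, hp⟩
            have hqT₀ : q ∈ T₀ := hmemT₀.mpr ⟨hqb, hqa, hq⟩
            refine h1 p hpT₀ q hqT₀ hpq (fun r hr hr1 hr2 => ?_) bp bq hbp hbq
            have hnr := hno r (hT₀sub hr) hr1 hr2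
            rwa [hχo r (hmemT₀.mp hr).2.1 (hmemT₀.mp hr).1] at hnr
  · -- Sep
    intro p hp q hq hpq hp0 hq0
    have hpa : p ≠ a := by intro h; rw [h, hχa] at hp0; exact Option.some_ne_none _ hp0
    have hpb : p ≠ b := by intro h; rw [h, hχb] at hp0; exact Option.some_ne_none _ hp0
    have hqa : q ≠ a := by intro h; rw [h, hχa] at hq0; exact Option.some_ne_none _ hq0
    have hqb : q ≠ b := by intro h; rw [h, hχb] at hq0; exact Option.some_ne_none _ hq0
    rw [hχo p hpa hpb] at hp0
    rw [hχo q hqa hqb] at hq0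
    obtain ⟨r, hr, hr1, hr2, hr3⟩ :=
      h2 p (hmemT₀.mpr ⟨hpb, hpa, hp⟩) q (hmemT₀.mpr ⟨hqb, hqa, hq⟩) hpq hp0 hq0
    refine ⟨r, hT₀sub hr, hr1, hr2, ?_⟩
    rw [hχo r (hmemT₀.mp hr).2.1 (hmemT₀.mp hr).1]
    exact hr3

/-- The downward-closed (in lex (z,x)) subsets of `S`. -/
def Down (x z : α → ℝ) (S D : Finset α) : Prop :=
  D ⊆ S ∧ ∀ p ∈ D, ∀ q ∈ S, (z q < z p ∨ (z q = z p ∧ x q ≤ x p)) → q ∈ D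

/-- Window condition for a downward set. -/
def Wgood (x : α → ℝ) (D : Finset α) (χ : α → Option Bool) : Prop :=
  ∀ a ∈ D, ∀ b ∈ D, ∀ c ∈ D, ∀ d ∈ D,
    x a < x b → x b < x c → x c < x d →
    (∀ e ∈ D, x a < x e → x e < x d → e = b ∨ e = c) →
    (∃ u, (u = a ∨ u = b ∨ u = c ∨ u = d) ∧ χ u = some true) ∧
    (∃ v, (v = a ∨ v = b ∨ v = c ∨ v = d) ∧ χ v = some false)

lemma core (x z : α → ℝ) : ∀ (n : ℕ) (S : Finset α), S.card = n → Set.InjOn x ↑S →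
    ∃ χ : α → Option Bool, Alt x S χ ∧ Sep x S χ ∧
      ∀ D : Finset α, Down x z S D → Wgood x D χ := by
  intro n
  induction n with
  | zero =>
    intro S hS _
    have hSempty : S = ∅ := Finset.card_eq_zero.mp hS
    subst hSempty
    refine ⟨fun _ => none, ?_, ?_, ?_⟩
    · intro p hp; exact absurd hp (Finset.notMem_empty p)
    · intro p hp; exact absurd hp (Finset.notMem_empty p)
    · intro D hD a haD
      exact absurd (hD.1 haD) (Finset.notMem_empty a)
  | succ n ih =>
    intro S hS hx
    have hne : S.Nonempty := by
      rw [← Finset.card_pos, hS]; omega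
    -- pick the lex (z,x)-maximal element m
    obtain ⟨m₁, hm₁S, hm₁⟩ := Finset.exists_max_image S z hne
    obtain ⟨m, hmM, hmmax⟩ :=
      Finset.exists_max_image (S.filter (fun p => z p = z m₁)) x
        ⟨m₁, Finset.mem_filter.mpr ⟨hm₁S, rfl⟩⟩
    have hmS : m ∈ S := (Finset.mem_filter.mp hmM).1
    have hmz : z m = z m₁ := (Finset.mem_filter.mp hmM).2
    have hlex : ∀ q ∈ S, q ≠ m → (z q < z m ∨ (z q = z m ∧ x q < x m)) := by
      intro q hq hqm
      rcases lt_or_eq_of_le (hm₁ q hq) with h | h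
      · exact Or.inl (hmz ▸ h)
      · refine Or.inr ⟨hmz ▸ h, ?_⟩
        have hqM : q ∈ S.filter (fun p => z p = z m₁) := Finset.mem_filter.mpr ⟨hq, h⟩
        rcases lt_or_eq_of_le (hmmax q hqM) with h' | h'
        · exact h'
        · exact absurd (hx hq hmS h') hqm
    set S' := S.erase m with hS'
    have hS'sub : S' ⊆ S := Finset.erase_subset m S
    have hcard' : S'.card = n := by
      rw [hS', Finset.card_erase_of_mem hmS, hS]
      omega
    have hx' : Set.InjOn x ↑S' := hx.mono (by exact_mod_cast hS'sub)
    obtain ⟨χ', h1', h2', h3'⟩ := ih S' hcard' hx'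
    have hmS' : m ∉ S' := Finset.notMem_erase m S
    -- the downward set containing m is S itself
    have hDfull : ∀ D : Finset α, Down x z S D → m ∈ D → D = S := by
      intro D hD hmD
      apply Finset.Subset.antisymm hD.1
      intro q hq
      by_cases hqm : q = m
      · exact hqm ▸ hmD
      · rcases hlex q hq hqm with h | h
        · exact hD.2 m hmD q hq (Or.inl h)
        · exact hD.2 m hmD q hq (Or.inr ⟨h.1, le_of_lt h.2⟩)
    have hDsub' : ∀ D : Finset α, Down x z S D → m ∉ D → Down x z S' D := by
      intro D hD hmD
      constructor
      · intro q hq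
        exact Finset.mem_erase.mpr ⟨fun h => hmD (h ▸ hq), hD.1 hq⟩
      · intro p hp q hq hlex'
        exact hD.2 p hp q (hS'sub hq) hlex'
    by_cases hbad : ∃ q ∈ S', χ' q = none ∧
        ∀ r ∈ S', ((x q < x r ∧ x r < x m) ∨ (x m < x r ∧ x r < x q)) → χ' r = none
    · -- must color: q and m form a free pair
      obtain ⟨q, hqS', hq0, hqfree⟩ := hbad
      have hqS : q ∈ S := hS'sub hqS'
      have hqm : q ≠ m := fun h => hmS' (h ▸ hqS')
      have hxqm : x q ≠ x m := fun h => hqm (hx hqS hmS h)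
      -- no point of S strictly between q and m (in either orientation)
      have hnothing : ∀ r ∈ S', ((x q < x r ∧ x r < x m) ∨ (x m < x r ∧ x r < x q)) → False := by
        intro r hr hbet
        have hr0 : χ' r = none := hqfree r hr hbet
        have hrq : r ≠ q := by
          rcases hbet with ⟨h1, _⟩ | ⟨_, h2⟩
          · exact fun h => absurd (h ▸ h1) (lt_irrefl _)
          · exact fun h => absurd (h ▸ h2) (lt_irrefl _)
        rcases hbet with ⟨h1, h2⟩ | ⟨h1, h2⟩
        · obtain ⟨s, hs, hs1, hs2, hs3⟩ := h2' q hqS' r hr h1 hq0 hr0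
          exact hs3 (hqfree s hs (Or.inl ⟨hs1, hs2.trans h2⟩))
        · obtain ⟨s, hs, hs1, hs2, hs3⟩ := h2' r hr q hqS' h2 hr0 hq0
          exact hs3 (hqfree s hs (Or.inr ⟨h1.trans hs1, hs2⟩))
      -- orient the pair
      rcases lt_or_gt_of_ne hxqm with hqlt | hmlt
      · -- a = q, b = m
        have hfree : ∀ r ∈ S, ¬(x q < x r ∧ x r < x m) := by
          intro r hr hbet
          by_cases hrm : r = m
          · exact absurd (hrm ▸ hbet.2) (lt_irrefl _)
          · exact hnothing r (Finset.mem_erase.mpr ⟨hrm, hr⟩) (Or.inl hbet)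
        have hT₀ : (S.erase q).erase m = S'.erase q := by
          rw [hS', Finset.erase_right_comm]
        have h1q : Alt x (S'.erase q) χ' := by
          intro p hp p' hp' hpp' hno bp bq hbp hbq
          refine h1' p (Finset.mem_of_mem_erase hp) p' (Finset.mem_of_mem_erase hp') hpp'
            ?_ bp bq hbp hbq
          intro r hr hr1 hr2
          by_cases hrq : r = q
          · exact hrq ▸ hq0
          · exact hno r (Finset.mem_erase.mpr ⟨hrq, hr⟩) hr1 hr2
        have h2q : Sep x (S'.erase q) χ' := by
          intro p hp p' hp' hpp' h0 h0'
          obtain ⟨r, hr, hr1, hr2, hr3⟩ :=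
            h2' p (Finset.mem_of_mem_erase hp) p' (Finset.mem_of_mem_erase hp') hpp' h0 h0'
          have hrq : r ≠ q := fun h => hr3 (h ▸ hq0)
          exact ⟨r, Finset.mem_erase.mpr ⟨hrq, hr⟩, hr1, hr2, hr3⟩
        obtain ⟨χ, hχo, hAlt, hSep⟩ :=
          pair_insert x S hx χ' q m hqS hmS hqlt hfree (hT₀ ▸ h1q) (hT₀ ▸ h2q)
        refine ⟨χ, hAlt, hSep, ?_⟩
        intro D hD
        by_cases hmD : m ∈ D
        · have hDS : D = S := hDfull D hD hmD
          subst hDS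
          intro a ha b hb c hc d hd hab hbc hcd hcons
          exact good_of_inv x D χ hAlt hSep ha hb hc hd hab hbc hcd hcons
        · have hD' := hDsub' D hD hmD
          have hW := h3' D hD'
          intro a ha b hb c hc d hd hab hbc hcd hcons
          obtain ⟨⟨u, hu, hut⟩, ⟨v, hv, hvf⟩⟩ := hW a ha b hb c hc d hd hab hbc hcd hcons
          have humem : u ∈ D := by rcases hu with rfl | rfl | rfl | rfl <;> assumption
          have hvmem : v ∈ D := by rcases hv with rfl | rfl | rfl | rfl <;> assumption
          have huq : u ≠ q := fun h => by rw [h, hq0] at hut; cases hut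
          have hum : u ≠ m := fun h => hmD (h ▸ humem)
          have hvq : v ≠ q := fun h => by rw [h, hq0] at hvf; cases hvf
          have hvm : v ≠ m := fun h => hmD (h ▸ hvmem)
          exact ⟨⟨u, hu, by rw [hχo u huq hum]; exact hut⟩,
                 ⟨v, hv, by rw [hχo v hvq hvm]; exact hvf⟩⟩
      · -- a = m, b = q
        have hfree : ∀ r ∈ S, ¬(x m < x r ∧ x r < x q) := by
          intro r hr hbet
          by_cases hrm : r = m
          · exact absurd (hrm ▸ hbet.1) (lt_irrefl _)
          · exact hnothing r (Finset.mem_erase.mpr ⟨hrm, hr⟩) (Or.inr hbet)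
        have hT₀ : (S.erase m).erase q = S'.erase q := by rw [hS']
        have h1q : Alt x (S'.erase q) χ' := by
          intro p hp p' hp' hpp' hno bp bq hbp hbq
          refine h1' p (Finset.mem_of_mem_erase hp) p' (Finset.mem_of_mem_erase hp') hpp'
            ?_ bp bq hbp hbq
          intro r hr hr1 hr2
          by_cases hrq : r = q
          · exact hrq ▸ hq0
          · exact hno r (Finset.mem_erase.mpr ⟨hrq, hr⟩) hr1 hr2
        have h2q : Sep x (S'.erase q) χ' := by
          intro p hp p' hp' hpp' h0 h0'
          obtain ⟨r, hr, hr1, hr2, hr3⟩ :=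
            h2' p (Finset.mem_of_mem_erase hp) p' (Finset.mem_of_mem_erase hp') hpp' h0 h0'
          have hrq : r ≠ q := fun h => hr3 (h ▸ hq0)
          exact ⟨r, Finset.mem_erase.mpr ⟨hrq, hr⟩, hr1, hr2, hr3⟩
        obtain ⟨χ, hχo, hAlt, hSep⟩ :=
          pair_insert x S hx χ' m q hmS hqS hmlt hfree (hT₀ ▸ h1q) (hT₀ ▸ h2q)
        refine ⟨χ, hAlt, hSep, ?_⟩
        intro D hD
        by_cases hmD : m ∈ D
        · have hDS : D = S := hDfull D hD hmD
          subst hDS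
          intro a ha b hb c hc d hd hab hbc hcd hcons
          exact good_of_inv x D χ hAlt hSep ha hb hc hd hab hbc hcd hcons
        · have hD' := hDsub' D hD hmD
          have hW := h3' D hD'
          intro a ha b hb c hc d hd hab hbc hcd hcons
          obtain ⟨⟨u, hu, hut⟩, ⟨v, hv, hvf⟩⟩ := hW a ha b hb c hc d hd hab hbc hcd hcons
          have humem : u ∈ D := by rcases hu with rfl | rfl | rfl | rfl <;> assumption
          have hvmem : v ∈ D := by rcases hv with rfl | rfl | rfl | rfl <;> assumption
          have huq : u ≠ q := fun h => by rw [h, hq0] at hut; cases hut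
          have hum : u ≠ m := fun h => hmD (h ▸ humem)
          have hvq : v ≠ q := fun h => by rw [h, hq0] at hvf; cases hvf
          have hvm : v ≠ m := fun h => hmD (h ▸ hvmem)
          exact ⟨⟨u, hu, by rw [hχo u hum huq]; exact hut⟩,
                 ⟨v, hv, by rw [hχo v hvm hvq]; exact hvf⟩⟩
    · -- leave m uncolored
      push_neg at hbad
      set χm : α → Option Bool := fun p => if p = m then none else χ' p with hχm
      have hχmm : ∀ p, p ≠ m → χm p = χ' p := by
        intro p hpm; simp [hχm, hpm]
      have hAlt : Alt x S χm := by
        intro p hp p' hp' hpp' hno bp bq hbp hbq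
        have hpm : p ≠ m := by
          intro h; rw [h] at hbp; simp [hχm] at hbp
        have hp'm : p' ≠ m := by
          intro h; rw [h] at hbq; simp [hχm] at hbq
        rw [hχmm p hpm] at hbp
        rw [hχmm p' hp'm] at hbq
        refine h1' p (Finset.mem_erase.mpr ⟨hpm, hp⟩) p' (Finset.mem_erase.mpr ⟨hp'm, hp'⟩)
          hpp' ?_ bp bq hbp hbq
        intro r hr hr1 hr2
        have hrr := hno r (hS'sub hr) hr1 hr2
        rwa [hχmm r (Finset.mem_erase.mp hr).1] at hrr
      have hSep : Sep x S χm := by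
        intro p hp p' hp' hpp' h0 h0'
        by_cases hpm : p = m
        · subst p
          have hp'm : p' ≠ m := fun h => absurd (h ▸ hpp') (lt_irrefl _)
          rw [hχmm p' hp'm] at h0'
          have hp'S' : p' ∈ S' := Finset.mem_erase.mpr ⟨hp'm, hp'⟩
          obtain ⟨r, hr, hbet, hr3⟩ := hbad p' hp'S' h0'
          have hrm : r ≠ m := (Finset.mem_erase.mp hr).1
          rcases hbet with ⟨h1, h2⟩ | ⟨h1, h2⟩
          · exact absurd (h2.trans hpp') (by intro h; exact absurd (h1.trans h) (lt_irrefl _))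
          · exact ⟨r, hS'sub hr, h1, h2, by rwa [hχmm r hrm]⟩
        · by_cases hp'm : p' = m
          · subst p'
            rw [hχmm p hpm] at h0
            have hpS' : p ∈ S' := Finset.mem_erase.mpr ⟨hpm, hp⟩
            obtain ⟨r, hr, hbet, hr3⟩ := hbad p hpS' h0
            have hrm : r ≠ m := (Finset.mem_erase.mp hr).1
            rcases hbet with ⟨h1, h2⟩ | ⟨h1, h2⟩
            · exact ⟨r, hS'sub hr, h1, h2, by rwa [hχmm r hrm]⟩
            · exact absurd (hpp'.trans h1) (by intro h; exact absurd (h2.trans h) (lt_irrefl _))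
          · rw [hχmm p hpm] at h0
            rw [hχmm p' hp'm] at h0'
            obtain ⟨r, hr, hr1, hr2, hr3⟩ :=
              h2' p (Finset.mem_erase.mpr ⟨hpm, hp⟩) p' (Finset.mem_erase.mpr ⟨hp'm, hp'⟩)
                hpp' h0 h0'
            exact ⟨r, hS'sub hr, hr1, hr2, by rwa [hχmm r (Finset.mem_erase.mp hr).1]⟩
      refine ⟨χm, hAlt, hSep, ?_⟩
      intro D hD
      by_cases hmD : m ∈ D
      · have hDS : D = S := hDfull D hD hmD
        subst hDS
        intro a ha b hb c hc d hd hab hbc hcd hcons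
        exact good_of_inv x D χm hAlt hSep ha hb hc hd hab hbc hcd hcons
      · have hD' := hDsub' D hD hmD
        have hW := h3' D hD'
        intro a ha b hb c hc d hd hab hbc hcd hcons
        obtain ⟨⟨u, hu, hut⟩, ⟨v, hv, hvf⟩⟩ := hW a ha b hb c hc d hd hab hbc hcd hcons
        have humem : u ∈ D := by rcases hu with rfl | rfl | rfl | rfl <;> assumption
        have hvmem : v ∈ D := by rcases hv with rfl | rfl | rfl | rfl <;> assumption
        have hum : u ≠ m := fun h => hmD (h ▸ humem)
        have hvm : v ≠ m := fun h => hmD (h ▸ hvmem)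
        exact ⟨⟨u, hu, by rw [hχmm u hum]; exact hut⟩,
               ⟨v, hv, by rw [hχmm v hvm]; exact hvf⟩⟩

end OctantAux

/-- If the points of a finite set in ℝ³ are pairwise incomparable in their first two
coordinates, then the set can be two-colored so that every translate of the octant
`W = {(x,y,z) : x ≤ 0, y ≤ 0, z ≤ 0}` containing at least 4 of the points contains
points of both colors. -/
theorem octant_incomparable_coloring_four
    (W : Set (Fin 3 → ℝ)) (hW : W = {q | q 0 ≤ 0 ∧ q 1 ≤ 0 ∧ q 2 ≤ 0})
    (P : Finset (Fin 3 → ℝ))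
    (hinc : ∀ p ∈ P, ∀ q ∈ P, p ≠ q →
      (p 0 < q 0 ∧ q 1 < p 1) ∨ (q 0 < p 0 ∧ p 1 < q 1)) :
    ∃ χ : (Fin 3 → ℝ) → Bool, ∀ t : Fin 3 → ℝ,
      4 ≤ ((P : Set (Fin 3 → ℝ)) ∩ (t + ·) '' W).ncard →
      (∃ p ∈ (P : Set (Fin 3 → ℝ)) ∩ (t + ·) '' W, χ p = true) ∧
      (∃ q ∈ (P : Set (Fin 3 → ℝ)) ∩ (t + ·) '' W, χ q = false) := by
  classical
  set x : (Fin 3 → ℝ) → ℝ := fun p => p 0 with hxdef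
  set z : (Fin 3 → ℝ) → ℝ := fun p => p 2 with hzdef
  have hxinj : Set.InjOn x ↑P := by
    intro p hp q hq hpq
    by_contra hne
    rcases hinc p hp q hq hne with ⟨h, _⟩ | ⟨h, _⟩
    · rw [hxdef] at hpq; simp only at hpq; rw [hpq] at h; exact absurd h (lt_irrefl _)
    · rw [hxdef] at hpq; simp only at hpq; rw [hpq] at h; exact absurd h (lt_irrefl _)
  obtain ⟨χ₀, -, -, h3⟩ := OctantAux.core x z P.card P rfl hxinj
  refine ⟨fun p => (χ₀ p).getD true, ?_⟩
  intro t hcard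
  have hmem : ∀ p : Fin 3 → ℝ,
      p ∈ (P : Set (Fin 3 → ℝ)) ∩ (t + ·) '' W ↔
        p ∈ P ∧ p 0 ≤ t 0 ∧ p 1 ≤ t 1 ∧ p 2 ≤ t 2 := by
    intro p
    constructor
    · rintro ⟨hpP, w, hwW, hw⟩
      rw [hW] at hwW
      obtain ⟨hw0, hw1, hw2⟩ := hwW
      refine ⟨hpP, ?_, ?_, ?_⟩
      · rw [← hw]; simpa using hw0
      · rw [← hw]; simpa using hw1
      · rw [← hw]; simpa using hw2
    · rintro ⟨hpP, h0, h1, h2⟩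
      refine ⟨hpP, p - t, ?_, by ext i; simp only [Pi.add_apply, Pi.sub_apply]; ring⟩
      rw [hW]
      exact ⟨by simpa using h0, by simpa using h1, by simpa using h2⟩
  set T : Finset (Fin 3 → ℝ) := P.filter (fun p => p 0 ≤ t 0 ∧ p 1 ≤ t 1 ∧ p 2 ≤ t 2) with hT
  have hsetT : (P : Set (Fin 3 → ℝ)) ∩ (t + ·) '' W = ↑T := by
    ext p
    rw [hmem p]
    simp [hT]
  rw [hsetT] at hcard ⊢
  rw [Set.ncard_coe_finset] at hcard
  set D : Finset (Fin 3 → ℝ) := P.filter (fun p => p 2 ≤ t 2) with hD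
  have hTP : T ⊆ P := Finset.filter_subset _ _
  have hTD : T ⊆ D := by
    intro p hp
    rw [hT] at hp
    rw [hD]
    exact Finset.mem_filter.mpr ⟨(Finset.mem_filter.mp hp).1, (Finset.mem_filter.mp hp).2.2.2⟩
  have hDdown : OctantAux.Down x z P D := by
    refine ⟨Finset.filter_subset _ _, ?_⟩
    intro p hp q hq hlex
    rw [hD] at hp ⊢
    refine Finset.mem_filter.mpr ⟨hq, ?_⟩
    have hpz : p 2 ≤ t 2 := (Finset.mem_filter.mp hp).2
    rcases hlex with h | h
    · exact le_trans (le_of_lt h) hpz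
    · exact le_trans (le_of_eq h.1) hpz
  -- extract the four x-smallest elements of T
  obtain ⟨a, haT, hamin⟩ := Finset.exists_min_image T x (Finset.card_pos.mp (by omega))
  set T1 := T.erase a with hT1d
  have hT1card : T1.card = T.card - 1 := Finset.card_erase_of_mem haT
  obtain ⟨b, hbT1, hbmin⟩ := Finset.exists_min_image T1 x (Finset.card_pos.mp (by omega))
  set T2 := T1.erase b with hT2d
  have hT2card : T2.card = T1.card - 1 := Finset.card_erase_of_mem hbT1
  obtain ⟨c, hcT2, hcmin⟩ := Finset.exists_min_image T2 x (Finset.card_pos.mp (by omega))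
  set T3 := T2.erase c with hT3d
  have hT3card : T3.card = T2.card - 1 := Finset.card_erase_of_mem hcT2
  obtain ⟨d, hdT3, hdmin⟩ := Finset.exists_min_image T3 x (Finset.card_pos.mp (by omega))
  have hbT : b ∈ T := Finset.mem_of_mem_erase hbT1
  have hcT1 : c ∈ T1 := Finset.mem_of_mem_erase hcT2
  have hcT : c ∈ T := Finset.mem_of_mem_erase hcT1
  have hdT2 : d ∈ T2 := Finset.mem_of_mem_erase hdT3
  have hdT1 : d ∈ T1 := Finset.mem_of_mem_erase hdT2
  have hdT : d ∈ T := Finset.mem_of_mem_erase hdT1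
  have hinjT : Set.InjOn x ↑T := hxinj.mono (by exact_mod_cast hTP)
  have hab : x a < x b := by
    refine lt_of_le_of_ne (hamin b hbT) (fun h => ?_)
    exact (Finset.mem_erase.mp hbT1).1 (hinjT (Finset.mem_coe.mpr hbT) (Finset.mem_coe.mpr haT) h.symm)
  have hbc : x b < x c := by
    refine lt_of_le_of_ne (hbmin c hcT1) (fun h => ?_)
    exact (Finset.mem_erase.mp hcT2).1 (hinjT (Finset.mem_coe.mpr hcT) (Finset.mem_coe.mpr hbT) h.symm)
  have hcd : x c < x d := by
    refine lt_of_le_of_ne (hcmin d hdT2) (fun h => ?_)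
    exact (Finset.mem_erase.mp hdT3).1 (hinjT (Finset.mem_coe.mpr hdT) (Finset.mem_coe.mpr hcT) h.symm)
  have hcons : ∀ e ∈ D, x a < x e → x e < x d → e = b ∨ e = c := by
    intro e heD hae hed
    have heP : e ∈ P := (Finset.mem_filter.mp heD).1
    have hez : e 2 ≤ t 2 := (Finset.mem_filter.mp heD).2
    have haP : a ∈ P := hTP haT
    have hane : a ≠ e := fun h => absurd (h ▸ hae) (lt_irrefl _)
    have he0 : e 0 ≤ t 0 := by
      have hd0 : d 0 ≤ t 0 := (Finset.mem_filter.mp hdT).2.1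
      have : x e < x d := hed
      rw [hxdef] at this
      simp only at this
      linarith
    have he1 : e 1 ≤ t 1 := by
      have ha1 : a 1 ≤ t 1 := (Finset.mem_filter.mp haT).2.2.1
      rcases hinc a haP e heP hane with ⟨_, h11⟩ | ⟨h01, _⟩
      · linarith
      · exfalso
        rw [hxdef] at hae
        simp only at hae
        linarith
    have heT : e ∈ T := by
      rw [hT]
      exact Finset.mem_filter.mpr ⟨heP, he0, he1, hez⟩
    by_cases heb : e = b
    · exact Or.inl heb
    by_cases hec : e = c
    · exact Or.inr hec
    exfalso
    have hea : e ≠ a := fun h => hane h.symm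
    have heT3 : e ∈ T3 := by
      rw [hT3d, hT2d, hT1d]
      exact Finset.mem_erase.mpr ⟨hec, Finset.mem_erase.mpr ⟨heb, Finset.mem_erase.mpr ⟨hea, heT⟩⟩⟩
    exact absurd (hdmin e heT3) (not_le.mpr hed)
  obtain ⟨⟨u, hu, hut⟩, ⟨v, hv, hvf⟩⟩ :=
    h3 D hDdown a (hTD haT) b (hTD hbT) c (hTD hcT) d (hTD hdT) hab hbc hcd hcons
  have humem : u ∈ T := by rcases hu with rfl | rfl | rfl | rfl <;> assumption
  have hvmem : v ∈ T := by rcases hv with rfl | rfl | rfl | rfl <;> assumption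
  exact ⟨⟨u, Finset.mem_coe.mpr humem, by simp [hut]⟩,
         ⟨v, Finset.mem_coe.mpr hvmem, by simp [hvf]⟩⟩
end

section
/- There exists a set P of 10 points in ℝ² and a nondegenerate triangle T in ℝ² such that for every coloring χ : P → {red, blue} there exists a translate t + T of T whose intersection with P consists of exactly 3 points, all of the same color. -/
namespace TriangleTenPoints

noncomputable section

def p0 : Fin 2 → ℝ := ![48, 44]
def p1 : Fin 2 → ℝ := ![72, 252]
def p2 : Fin 2 → ℝ := ![152, 156]
def p3 : Fin 2 → ℝ := ![180, 344]
def p4 : Fin 2 → ℝ := ![188, 140]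
def p5 : Fin 2 → ℝ := ![216, 56]
def p6 : Fin 2 → ℝ := ![276, 264]
def p7 : Fin 2 → ℝ := ![312, 44]
def p8 : Fin 2 → ℝ := ![372, 120]
def p9 : Fin 2 → ℝ := ![388, 148]
def A' : Fin 2 → ℝ := ![0, 0]
def B' : Fin 2 → ℝ := ![264, 0]
def C' : Fin 2 → ℝ := ![0, 264]
def t0 : Fin 2 → ℝ := ![72, 140]
def t1 : Fin 2 → ℝ := ![72, 252]
def t2 : Fin 2 → ℝ := ![152, 156]
def t3 : Fin 2 → ℝ := ![124, 148]
def t4 : Fin 2 → ℝ := ![152, 76]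
def t5 : Fin 2 → ℝ := ![180, 80]
def t6 : Fin 2 → ℝ := ![153, 121]
def t7 : Fin 2 → ℝ := ![153, 44]
def t8 : Fin 2 → ℝ := ![188, 140]
def t9 : Fin 2 → ℝ := ![216, 56]
def t10 : Fin 2 → ℝ := ![312, 44]
def P : Finset (Fin 2 → ℝ) := {p0, p1, p2, p3, p4, p5, p6, p7, p8, p9}

lemma ne_0_1 : p0 ≠ p1 := by intro h; have h0 := congrFun h 0; norm_num [p0, p1] at h0
lemma ne_0_2 : p0 ≠ p2 := by intro h; have h0 := congrFun h 0; norm_num [p0, p2] at h0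
lemma ne_0_3 : p0 ≠ p3 := by intro h; have h0 := congrFun h 0; norm_num [p0, p3] at h0
lemma ne_0_4 : p0 ≠ p4 := by intro h; have h0 := congrFun h 0; norm_num [p0, p4] at h0
lemma ne_0_5 : p0 ≠ p5 := by intro h; have h0 := congrFun h 0; norm_num [p0, p5] at h0
lemma ne_0_6 : p0 ≠ p6 := by intro h; have h0 := congrFun h 0; norm_num [p0, p6] at h0
lemma ne_0_7 : p0 ≠ p7 := by intro h; have h0 := congrFun h 0; norm_num [p0, p7] at h0
lemma ne_0_8 : p0 ≠ p8 := by intro h; have h0 := congrFun h 0; norm_num [p0, p8] at h0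
lemma ne_0_9 : p0 ≠ p9 := by intro h; have h0 := congrFun h 0; norm_num [p0, p9] at h0
lemma ne_1_2 : p1 ≠ p2 := by intro h; have h0 := congrFun h 0; norm_num [p1, p2] at h0
lemma ne_1_3 : p1 ≠ p3 := by intro h; have h0 := congrFun h 0; norm_num [p1, p3] at h0
lemma ne_1_4 : p1 ≠ p4 := by intro h; have h0 := congrFun h 0; norm_num [p1, p4] at h0
lemma ne_1_5 : p1 ≠ p5 := by intro h; have h0 := congrFun h 0; norm_num [p1, p5] at h0
lemma ne_1_6 : p1 ≠ p6 := by intro h; have h0 := congrFun h 0; norm_num [p1, p6] at h0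
lemma ne_1_7 : p1 ≠ p7 := by intro h; have h0 := congrFun h 0; norm_num [p1, p7] at h0
lemma ne_1_8 : p1 ≠ p8 := by intro h; have h0 := congrFun h 0; norm_num [p1, p8] at h0
lemma ne_1_9 : p1 ≠ p9 := by intro h; have h0 := congrFun h 0; norm_num [p1, p9] at h0
lemma ne_2_3 : p2 ≠ p3 := by intro h; have h0 := congrFun h 0; norm_num [p2, p3] at h0
lemma ne_2_4 : p2 ≠ p4 := by intro h; have h0 := congrFun h 0; norm_num [p2, p4] at h0
lemma ne_2_5 : p2 ≠ p5 := by intro h; have h0 := congrFun h 0; norm_num [p2, p5] at h0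
lemma ne_2_6 : p2 ≠ p6 := by intro h; have h0 := congrFun h 0; norm_num [p2, p6] at h0
lemma ne_2_7 : p2 ≠ p7 := by intro h; have h0 := congrFun h 0; norm_num [p2, p7] at h0
lemma ne_2_8 : p2 ≠ p8 := by intro h; have h0 := congrFun h 0; norm_num [p2, p8] at h0
lemma ne_2_9 : p2 ≠ p9 := by intro h; have h0 := congrFun h 0; norm_num [p2, p9] at h0
lemma ne_3_4 : p3 ≠ p4 := by intro h; have h0 := congrFun h 0; norm_num [p3, p4] at h0
lemma ne_3_5 : p3 ≠ p5 := by intro h; have h0 := congrFun h 0; norm_num [p3, p5] at h0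
lemma ne_3_6 : p3 ≠ p6 := by intro h; have h0 := congrFun h 0; norm_num [p3, p6] at h0
lemma ne_3_7 : p3 ≠ p7 := by intro h; have h0 := congrFun h 0; norm_num [p3, p7] at h0
lemma ne_3_8 : p3 ≠ p8 := by intro h; have h0 := congrFun h 0; norm_num [p3, p8] at h0
lemma ne_3_9 : p3 ≠ p9 := by intro h; have h0 := congrFun h 0; norm_num [p3, p9] at h0
lemma ne_4_5 : p4 ≠ p5 := by intro h; have h0 := congrFun h 0; norm_num [p4, p5] at h0
lemma ne_4_6 : p4 ≠ p6 := by intro h; have h0 := congrFun h 0; norm_num [p4, p6] at h0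
lemma ne_4_7 : p4 ≠ p7 := by intro h; have h0 := congrFun h 0; norm_num [p4, p7] at h0
lemma ne_4_8 : p4 ≠ p8 := by intro h; have h0 := congrFun h 0; norm_num [p4, p8] at h0
lemma ne_4_9 : p4 ≠ p9 := by intro h; have h0 := congrFun h 0; norm_num [p4, p9] at h0
lemma ne_5_6 : p5 ≠ p6 := by intro h; have h0 := congrFun h 0; norm_num [p5, p6] at h0
lemma ne_5_7 : p5 ≠ p7 := by intro h; have h0 := congrFun h 0; norm_num [p5, p7] at h0
lemma ne_5_8 : p5 ≠ p8 := by intro h; have h0 := congrFun h 0; norm_num [p5, p8] at h0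
lemma ne_5_9 : p5 ≠ p9 := by intro h; have h0 := congrFun h 0; norm_num [p5, p9] at h0
lemma ne_6_7 : p6 ≠ p7 := by intro h; have h0 := congrFun h 0; norm_num [p6, p7] at h0
lemma ne_6_8 : p6 ≠ p8 := by intro h; have h0 := congrFun h 0; norm_num [p6, p8] at h0
lemma ne_6_9 : p6 ≠ p9 := by intro h; have h0 := congrFun h 0; norm_num [p6, p9] at h0
lemma ne_7_8 : p7 ≠ p8 := by intro h; have h0 := congrFun h 0; norm_num [p7, p8] at h0
lemma ne_7_9 : p7 ≠ p9 := by intro h; have h0 := congrFun h 0; norm_num [p7, p9] at h0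
lemma ne_8_9 : p8 ≠ p9 := by intro h; have h0 := congrFun h 0; norm_num [p8, p9] at h0

lemma cardP : P.card = 10 := by
  rw [P]
  rw [Finset.card_insert_of_notMem (by simp only [Finset.mem_insert, Finset.mem_singleton]; push_neg; exact ⟨ne_0_1, ne_0_2, ne_0_3, ne_0_4, ne_0_5, ne_0_6, ne_0_7, ne_0_8, ne_0_9⟩)]
  rw [Finset.card_insert_of_notMem (by simp only [Finset.mem_insert, Finset.mem_singleton]; push_neg; exact ⟨ne_1_2, ne_1_3, ne_1_4, ne_1_5, ne_1_6, ne_1_7, ne_1_8, ne_1_9⟩)]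
  rw [Finset.card_insert_of_notMem (by simp only [Finset.mem_insert, Finset.mem_singleton]; push_neg; exact ⟨ne_2_3, ne_2_4, ne_2_5, ne_2_6, ne_2_7, ne_2_8, ne_2_9⟩)]
  rw [Finset.card_insert_of_notMem (by simp only [Finset.mem_insert, Finset.mem_singleton]; push_neg; exact ⟨ne_3_4, ne_3_5, ne_3_6, ne_3_7, ne_3_8, ne_3_9⟩)]
  rw [Finset.card_insert_of_notMem (by simp only [Finset.mem_insert, Finset.mem_singleton]; push_neg; exact ⟨ne_4_5, ne_4_6, ne_4_7, ne_4_8, ne_4_9⟩)]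
  rw [Finset.card_insert_of_notMem (by simp only [Finset.mem_insert, Finset.mem_singleton]; push_neg; exact ⟨ne_5_6, ne_5_7, ne_5_8, ne_5_9⟩)]
  rw [Finset.card_insert_of_notMem (by simp only [Finset.mem_insert, Finset.mem_singleton]; push_neg; exact ⟨ne_6_7, ne_6_8, ne_6_9⟩)]
  rw [Finset.card_insert_of_notMem (by simp only [Finset.mem_insert, Finset.mem_singleton]; push_neg; exact ⟨ne_7_8, ne_7_9⟩)]
  rw [Finset.card_insert_of_notMem (by simp only [Finset.mem_insert, Finset.mem_singleton]; push_neg; exact ne_8_9)]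
  rw [Finset.card_singleton]

lemma affind : AffineIndependent ℝ ![A', B', C'] := by
  rw [affineIndependent_iff_not_collinear]
  intro h
  have hr : Set.range ![A', B', C'] = {A', B', C'} := by
    ext x; simp [Matrix.range_cons, Matrix.range_empty]; tauto
  rw [hr, collinear_iff_of_mem (Set.mem_insert _ _)] at h
  obtain ⟨v, hv⟩ := h
  obtain ⟨a, ha⟩ := hv B' (by simp)
  obtain ⟨b, hb⟩ := hv C' (by simp)
  have ha0 := congrFun ha 0
  have ha1 := congrFun ha 1
  have hb0 := congrFun hb 0
  have hb1 := congrFun hb 1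
  simp [A', B', C'] at ha0 ha1 hb0 hb1
  rcases ha1 with rfl|h1 <;> rcases hb0 with rfl|h0 <;> simp_all

lemma hullsub : convexHull ℝ {A', B', C'} ⊆ {q : Fin 2 → ℝ | 0 ≤ q 0 ∧ 0 ≤ q 1 ∧ q 0 + q 1 ≤ 264} := by
  apply convexHull_min
  · rintro q (rfl|rfl|rfl) <;> norm_num [A', B', C']
  · have c1 : Convex ℝ {q : Fin 2 → ℝ | 0 ≤ q 0} :=
      convex_halfSpace_ge (⟨fun a b => rfl, fun c a => rfl⟩ : IsLinearMap ℝ fun q : Fin 2 → ℝ => q 0) 0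
    have c2 : Convex ℝ {q : Fin 2 → ℝ | 0 ≤ q 1} :=
      convex_halfSpace_ge (⟨fun a b => rfl, fun c a => rfl⟩ : IsLinearMap ℝ fun q : Fin 2 → ℝ => q 1) 0
    have c3 : Convex ℝ {q : Fin 2 → ℝ | q 0 + q 1 ≤ 264} :=
      convex_halfSpace_le (⟨fun a b => by simp; ring, fun c a => by simp; ring⟩ : IsLinearMap ℝ fun q : Fin 2 → ℝ => q 0 + q 1) 264
    exact c1.inter (c2.inter c3)

lemma hullmem (u v : ℝ) (hu : 0 ≤ u) (hv : 0 ≤ v) (huv : u + v ≤ 264) :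
    ![u, v] ∈ convexHull ℝ {A', B', C'} := by
  have h := Finset.centerMass_mem_convexHull (Finset.univ : Finset (Fin 3))
    (w := ![264 - u - v, u, v]) (z := ![A', B', C']) (s := {A', B', C'})
    (by intro i _; fin_cases i <;> simp <;> linarith)
    (by simp [Fin.sum_univ_three]; linarith)
    (by intro i _; fin_cases i <;> simp)
  convert h using 1
  rw [Finset.centerMass]
  funext x
  simp [Fin.sum_univ_three, A', B', C']
  fin_cases x <;> simp <;> ring

lemma edge0 : ((P : Set (Fin 2 → ℝ)) ∩ (t0 + ·) '' (convexHull ℝ {A', B', C'})) = {p1, p2, p4} := by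
  apply Set.eq_of_subset_of_subset
  · rintro q ⟨hqP, w, hw, hqe⟩
    obtain ⟨h1, h2, h3⟩ := hullsub hw
    have e0 : q 0 = t0 0 + w 0 := by rw [← hqe]; rfl
    have e1 : q 1 = t0 1 + w 1 := by rw [← hqe]; rfl
    simp only [P, Finset.coe_insert, Set.mem_insert_iff, Finset.coe_singleton, Set.mem_singleton_iff] at hqP
    rcases hqP with rfl|rfl|rfl|rfl|rfl|rfl|rfl|rfl|rfl|rfl <;>
      first
        | (simp; done)
        | (exfalso; norm_num [p0, p1, p2, p3, p4, p5, p6, p7, p8, p9, t0] at e0 e1; linarith)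
  · rintro q (rfl|rfl|rfl)
    · exact ⟨by simp [P], ![0, 112], hullmem 0 112 (by norm_num) (by norm_num) (by norm_num), by funext x; fin_cases x <;> norm_num [t0, p1]⟩
    · exact ⟨by simp [P], ![80, 16], hullmem 80 16 (by norm_num) (by norm_num) (by norm_num), by funext x; fin_cases x <;> norm_num [t0, p2]⟩
    · exact ⟨by simp [P], ![116, 0], hullmem 116 0 (by norm_num) (by norm_num) (by norm_num), by funext x; fin_cases x <;> norm_num [t0, p4]⟩

lemma edge1 : ((P : Set (Fin 2 → ℝ)) ∩ (t1 + ·) '' (convexHull ℝ {A', B', C'})) = {p1, p3, p6} := by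
  apply Set.eq_of_subset_of_subset
  · rintro q ⟨hqP, w, hw, hqe⟩
    obtain ⟨h1, h2, h3⟩ := hullsub hw
    have e0 : q 0 = t1 0 + w 0 := by rw [← hqe]; rfl
    have e1 : q 1 = t1 1 + w 1 := by rw [← hqe]; rfl
    simp only [P, Finset.coe_insert, Set.mem_insert_iff, Finset.coe_singleton, Set.mem_singleton_iff] at hqP
    rcases hqP with rfl|rfl|rfl|rfl|rfl|rfl|rfl|rfl|rfl|rfl <;>
      first
        | (simp; done)
        | (exfalso; norm_num [p0, p1, p2, p3, p4, p5, p6, p7, p8, p9, t1] at e0 e1; linarith)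
  · rintro q (rfl|rfl|rfl)
    · exact ⟨by simp [P], ![0, 0], hullmem 0 0 (by norm_num) (by norm_num) (by norm_num), by funext x; fin_cases x <;> norm_num [t1, p1]⟩
    · exact ⟨by simp [P], ![108, 92], hullmem 108 92 (by norm_num) (by norm_num) (by norm_num), by funext x; fin_cases x <;> norm_num [t1, p3]⟩
    · exact ⟨by simp [P], ![204, 12], hullmem 204 12 (by norm_num) (by norm_num) (by norm_num), by funext x; fin_cases x <;> norm_num [t1, p6]⟩

lemma edge2 : ((P : Set (Fin 2 → ℝ)) ∩ (t2 + ·) '' (convexHull ℝ {A', B', C'})) = {p2, p3, p6} := by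
  apply Set.eq_of_subset_of_subset
  · rintro q ⟨hqP, w, hw, hqe⟩
    obtain ⟨h1, h2, h3⟩ := hullsub hw
    have e0 : q 0 = t2 0 + w 0 := by rw [← hqe]; rfl
    have e1 : q 1 = t2 1 + w 1 := by rw [← hqe]; rfl
    simp only [P, Finset.coe_insert, Set.mem_insert_iff, Finset.coe_singleton, Set.mem_singleton_iff] at hqP
    rcases hqP with rfl|rfl|rfl|rfl|rfl|rfl|rfl|rfl|rfl|rfl <;>
      first
        | (simp; done)
        | (exfalso; norm_num [p0, p1, p2, p3, p4, p5, p6, p7, p8, p9, t2] at e0 e1; linarith)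
  · rintro q (rfl|rfl|rfl)
    · exact ⟨by simp [P], ![0, 0], hullmem 0 0 (by norm_num) (by norm_num) (by norm_num), by funext x; fin_cases x <;> norm_num [t2, p2]⟩
    · exact ⟨by simp [P], ![28, 188], hullmem 28 188 (by norm_num) (by norm_num) (by norm_num), by funext x; fin_cases x <;> norm_num [t2, p3]⟩
    · exact ⟨by simp [P], ![124, 108], hullmem 124 108 (by norm_num) (by norm_num) (by norm_num), by funext x; fin_cases x <;> norm_num [t2, p6]⟩

lemma edge3 : ((P : Set (Fin 2 → ℝ)) ∩ (t3 + ·) '' (convexHull ℝ {A', B', C'})) = {p2, p3, p9} := by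
  apply Set.eq_of_subset_of_subset
  · rintro q ⟨hqP, w, hw, hqe⟩
    obtain ⟨h1, h2, h3⟩ := hullsub hw
    have e0 : q 0 = t3 0 + w 0 := by rw [← hqe]; rfl
    have e1 : q 1 = t3 1 + w 1 := by rw [← hqe]; rfl
    simp only [P, Finset.coe_insert, Set.mem_insert_iff, Finset.coe_singleton, Set.mem_singleton_iff] at hqP
    rcases hqP with rfl|rfl|rfl|rfl|rfl|rfl|rfl|rfl|rfl|rfl <;>
      first
        | (simp; done)
        | (exfalso; norm_num [p0, p1, p2, p3, p4, p5, p6, p7, p8, p9, t3] at e0 e1; linarith)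
  · rintro q (rfl|rfl|rfl)
    · exact ⟨by simp [P], ![28, 8], hullmem 28 8 (by norm_num) (by norm_num) (by norm_num), by funext x; fin_cases x <;> norm_num [t3, p2]⟩
    · exact ⟨by simp [P], ![56, 196], hullmem 56 196 (by norm_num) (by norm_num) (by norm_num), by funext x; fin_cases x <;> norm_num [t3, p3]⟩
    · exact ⟨by simp [P], ![264, 0], hullmem 264 0 (by norm_num) (by norm_num) (by norm_num), by funext x; fin_cases x <;> norm_num [t3, p9]⟩

lemma edge4 : ((P : Set (Fin 2 → ℝ)) ∩ (t4 + ·) '' (convexHull ℝ {A', B', C'})) = {p2, p4, p8} := by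
  apply Set.eq_of_subset_of_subset
  · rintro q ⟨hqP, w, hw, hqe⟩
    obtain ⟨h1, h2, h3⟩ := hullsub hw
    have e0 : q 0 = t4 0 + w 0 := by rw [← hqe]; rfl
    have e1 : q 1 = t4 1 + w 1 := by rw [← hqe]; rfl
    simp only [P, Finset.coe_insert, Set.mem_insert_iff, Finset.coe_singleton, Set.mem_singleton_iff] at hqP
    rcases hqP with rfl|rfl|rfl|rfl|rfl|rfl|rfl|rfl|rfl|rfl <;>
      first
        | (simp; done)
        | (exfalso; norm_num [p0, p1, p2, p3, p4, p5, p6, p7, p8, p9, t4] at e0 e1; linarith)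
  · rintro q (rfl|rfl|rfl)
    · exact ⟨by simp [P], ![0, 80], hullmem 0 80 (by norm_num) (by norm_num) (by norm_num), by funext x; fin_cases x <;> norm_num [t4, p2]⟩
    · exact ⟨by simp [P], ![36, 64], hullmem 36 64 (by norm_num) (by norm_num) (by norm_num), by funext x; fin_cases x <;> norm_num [t4, p4]⟩
    · exact ⟨by simp [P], ![220, 44], hullmem 220 44 (by norm_num) (by norm_num) (by norm_num), by funext x; fin_cases x <;> norm_num [t4, p8]⟩

lemma edge5 : ((P : Set (Fin 2 → ℝ)) ∩ (t5 + ·) '' (convexHull ℝ {A', B', C'})) = {p3, p4, p8} := by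
  apply Set.eq_of_subset_of_subset
  · rintro q ⟨hqP, w, hw, hqe⟩
    obtain ⟨h1, h2, h3⟩ := hullsub hw
    have e0 : q 0 = t5 0 + w 0 := by rw [← hqe]; rfl
    have e1 : q 1 = t5 1 + w 1 := by rw [← hqe]; rfl
    simp only [P, Finset.coe_insert, Set.mem_insert_iff, Finset.coe_singleton, Set.mem_singleton_iff] at hqP
    rcases hqP with rfl|rfl|rfl|rfl|rfl|rfl|rfl|rfl|rfl|rfl <;>
      first
        | (simp; done)
        | (exfalso; norm_num [p0, p1, p2, p3, p4, p5, p6, p7, p8, p9, t5] at e0 e1; linarith)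
  · rintro q (rfl|rfl|rfl)
    · exact ⟨by simp [P], ![0, 264], hullmem 0 264 (by norm_num) (by norm_num) (by norm_num), by funext x; fin_cases x <;> norm_num [t5, p3]⟩
    · exact ⟨by simp [P], ![8, 60], hullmem 8 60 (by norm_num) (by norm_num) (by norm_num), by funext x; fin_cases x <;> norm_num [t5, p4]⟩
    · exact ⟨by simp [P], ![192, 40], hullmem 192 40 (by norm_num) (by norm_num) (by norm_num), by funext x; fin_cases x <;> norm_num [t5, p8]⟩

lemma edge6 : ((P : Set (Fin 2 → ℝ)) ∩ (t6 + ·) '' (convexHull ℝ {A', B', C'})) = {p3, p4, p9} := by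
  apply Set.eq_of_subset_of_subset
  · rintro q ⟨hqP, w, hw, hqe⟩
    obtain ⟨h1, h2, h3⟩ := hullsub hw
    have e0 : q 0 = t6 0 + w 0 := by rw [← hqe]; rfl
    have e1 : q 1 = t6 1 + w 1 := by rw [← hqe]; rfl
    simp only [P, Finset.coe_insert, Set.mem_insert_iff, Finset.coe_singleton, Set.mem_singleton_iff] at hqP
    rcases hqP with rfl|rfl|rfl|rfl|rfl|rfl|rfl|rfl|rfl|rfl <;>
      first
        | (simp; done)
        | (exfalso; norm_num [p0, p1, p2, p3, p4, p5, p6, p7, p8, p9, t6] at e0 e1; linarith)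
  · rintro q (rfl|rfl|rfl)
    · exact ⟨by simp [P], ![27, 223], hullmem 27 223 (by norm_num) (by norm_num) (by norm_num), by funext x; fin_cases x <;> norm_num [t6, p3]⟩
    · exact ⟨by simp [P], ![35, 19], hullmem 35 19 (by norm_num) (by norm_num) (by norm_num), by funext x; fin_cases x <;> norm_num [t6, p4]⟩
    · exact ⟨by simp [P], ![235, 27], hullmem 235 27 (by norm_num) (by norm_num) (by norm_num), by funext x; fin_cases x <;> norm_num [t6, p9]⟩

lemma edge7 : ((P : Set (Fin 2 → ℝ)) ∩ (t7 + ·) '' (convexHull ℝ {A', B', C'})) = {p4, p5, p7} := by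
  apply Set.eq_of_subset_of_subset
  · rintro q ⟨hqP, w, hw, hqe⟩
    obtain ⟨h1, h2, h3⟩ := hullsub hw
    have e0 : q 0 = t7 0 + w 0 := by rw [← hqe]; rfl
    have e1 : q 1 = t7 1 + w 1 := by rw [← hqe]; rfl
    simp only [P, Finset.coe_insert, Set.mem_insert_iff, Finset.coe_singleton, Set.mem_singleton_iff] at hqP
    rcases hqP with rfl|rfl|rfl|rfl|rfl|rfl|rfl|rfl|rfl|rfl <;>
      first
        | (simp; done)
        | (exfalso; norm_num [p0, p1, p2, p3, p4, p5, p6, p7, p8, p9, t7] at e0 e1; linarith)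
  · rintro q (rfl|rfl|rfl)
    · exact ⟨by simp [P], ![35, 96], hullmem 35 96 (by norm_num) (by norm_num) (by norm_num), by funext x; fin_cases x <;> norm_num [t7, p4]⟩
    · exact ⟨by simp [P], ![63, 12], hullmem 63 12 (by norm_num) (by norm_num) (by norm_num), by funext x; fin_cases x <;> norm_num [t7, p5]⟩
    · exact ⟨by simp [P], ![159, 0], hullmem 159 0 (by norm_num) (by norm_num) (by norm_num), by funext x; fin_cases x <;> norm_num [t7, p7]⟩

lemma edge8 : ((P : Set (Fin 2 → ℝ)) ∩ (t8 + ·) '' (convexHull ℝ {A', B', C'})) = {p4, p6, p9} := by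
  apply Set.eq_of_subset_of_subset
  · rintro q ⟨hqP, w, hw, hqe⟩
    obtain ⟨h1, h2, h3⟩ := hullsub hw
    have e0 : q 0 = t8 0 + w 0 := by rw [← hqe]; rfl
    have e1 : q 1 = t8 1 + w 1 := by rw [← hqe]; rfl
    simp only [P, Finset.coe_insert, Set.mem_insert_iff, Finset.coe_singleton, Set.mem_singleton_iff] at hqP
    rcases hqP with rfl|rfl|rfl|rfl|rfl|rfl|rfl|rfl|rfl|rfl <;>
      first
        | (simp; done)
        | (exfalso; norm_num [p0, p1, p2, p3, p4, p5, p6, p7, p8, p9, t8] at e0 e1; linarith)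
  · rintro q (rfl|rfl|rfl)
    · exact ⟨by simp [P], ![0, 0], hullmem 0 0 (by norm_num) (by norm_num) (by norm_num), by funext x; fin_cases x <;> norm_num [t8, p4]⟩
    · exact ⟨by simp [P], ![88, 124], hullmem 88 124 (by norm_num) (by norm_num) (by norm_num), by funext x; fin_cases x <;> norm_num [t8, p6]⟩
    · exact ⟨by simp [P], ![200, 8], hullmem 200 8 (by norm_num) (by norm_num) (by norm_num), by funext x; fin_cases x <;> norm_num [t8, p9]⟩

lemma edge9 : ((P : Set (Fin 2 → ℝ)) ∩ (t9 + ·) '' (convexHull ℝ {A', B', C'})) = {p5, p8, p9} := by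
  apply Set.eq_of_subset_of_subset
  · rintro q ⟨hqP, w, hw, hqe⟩
    obtain ⟨h1, h2, h3⟩ := hullsub hw
    have e0 : q 0 = t9 0 + w 0 := by rw [← hqe]; rfl
    have e1 : q 1 = t9 1 + w 1 := by rw [← hqe]; rfl
    simp only [P, Finset.coe_insert, Set.mem_insert_iff, Finset.coe_singleton, Set.mem_singleton_iff] at hqP
    rcases hqP with rfl|rfl|rfl|rfl|rfl|rfl|rfl|rfl|rfl|rfl <;>
      first
        | (simp; done)
        | (exfalso; norm_num [p0, p1, p2, p3, p4, p5, p6, p7, p8, p9, t9] at e0 e1; linarith)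
  · rintro q (rfl|rfl|rfl)
    · exact ⟨by simp [P], ![0, 0], hullmem 0 0 (by norm_num) (by norm_num) (by norm_num), by funext x; fin_cases x <;> norm_num [t9, p5]⟩
    · exact ⟨by simp [P], ![156, 64], hullmem 156 64 (by norm_num) (by norm_num) (by norm_num), by funext x; fin_cases x <;> norm_num [t9, p8]⟩
    · exact ⟨by simp [P], ![172, 92], hullmem 172 92 (by norm_num) (by norm_num) (by norm_num), by funext x; fin_cases x <;> norm_num [t9, p9]⟩

lemma edge10 : ((P : Set (Fin 2 → ℝ)) ∩ (t10 + ·) '' (convexHull ℝ {A', B', C'})) = {p7, p8, p9} := by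
  apply Set.eq_of_subset_of_subset
  · rintro q ⟨hqP, w, hw, hqe⟩
    obtain ⟨h1, h2, h3⟩ := hullsub hw
    have e0 : q 0 = t10 0 + w 0 := by rw [← hqe]; rfl
    have e1 : q 1 = t10 1 + w 1 := by rw [← hqe]; rfl
    simp only [P, Finset.coe_insert, Set.mem_insert_iff, Finset.coe_singleton, Set.mem_singleton_iff] at hqP
    rcases hqP with rfl|rfl|rfl|rfl|rfl|rfl|rfl|rfl|rfl|rfl <;>
      first
        | (simp; done)
        | (exfalso; norm_num [p0, p1, p2, p3, p4, p5, p6, p7, p8, p9, t10] at e0 e1; linarith)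
  · rintro q (rfl|rfl|rfl)
    · exact ⟨by simp [P], ![0, 0], hullmem 0 0 (by norm_num) (by norm_num) (by norm_num), by funext x; fin_cases x <;> norm_num [t10, p7]⟩
    · exact ⟨by simp [P], ![60, 76], hullmem 60 76 (by norm_num) (by norm_num) (by norm_num), by funext x; fin_cases x <;> norm_num [t10, p8]⟩
    · exact ⟨by simp [P], ![76, 104], hullmem 76 104 (by norm_num) (by norm_num) (by norm_num), by funext x; fin_cases x <;> norm_num [t10, p9]⟩

set_option maxRecDepth 10000 in
set_option synthInstance.maxSize 5000 in
lemma colorKey (b1 b2 b3 b4 b5 b6 b7 b8 b9 : Bool) :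
    (b1 = b2 ∧ b2 = b4) ∨
    (b1 = b3 ∧ b3 = b6) ∨
    (b2 = b3 ∧ b3 = b6) ∨
    (b2 = b3 ∧ b3 = b9) ∨
    (b2 = b4 ∧ b4 = b8) ∨
    (b3 = b4 ∧ b4 = b8) ∨
    (b3 = b4 ∧ b4 = b9) ∨
    (b4 = b5 ∧ b5 = b7) ∨
    (b4 = b6 ∧ b6 = b9) ∨
    (b5 = b8 ∧ b8 = b9) ∨
    (b7 = b8 ∧ b8 = b9) := by
  revert b1 b2 b3 b4 b5 b6 b7 b8 b9; decide

lemma finish (t a b c : Fin 2 → ℝ)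
    (hset : ((P : Set (Fin 2 → ℝ)) ∩ (t + ·) '' (convexHull ℝ {A', B', C'})) = {a, b, c})
    (hab : a ≠ b) (hac : a ≠ c) (hbc : b ≠ c)
    (χ : (Fin 2 → ℝ) → Bool) (h1 : χ a = χ b) (h2 : χ b = χ c) :
    ((P : Set (Fin 2 → ℝ)) ∩ (t + ·) '' (convexHull ℝ {A', B', C'})).ncard = 3 ∧
      ∃ bo : Bool, ∀ p ∈ (P : Set (Fin 2 → ℝ)) ∩ (t + ·) '' (convexHull ℝ {A', B', C'}), χ p = bo := by
  rw [hset]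
  refine ⟨Set.ncard_eq_three.mpr ⟨a, b, c, hab, hac, hbc, rfl⟩, χ b, ?_⟩
  rintro p (rfl|rfl|rfl)
  · exact h1
  · rfl
  · exact h2.symm

end
end TriangleTenPoints

open TriangleTenPoints in
/-- There is a 10-point planar set and a nondegenerate triangle such that in any
two-coloring of the set there is a translate of the triangle containing exactly
3 points of the set, all of the same color. -/
theorem triangle_translates_lower_bound_ten_points :
    ∃ (P : Finset (Fin 2 → ℝ)) (A B C : Fin 2 → ℝ),
      P.card = 10 ∧ AffineIndependent ℝ ![A, B, C] ∧
      ∀ χ : (Fin 2 → ℝ) → Bool, ∃ t : Fin 2 → ℝ,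
        ((P : Set (Fin 2 → ℝ)) ∩ (t + ·) '' (convexHull ℝ {A, B, C})).ncard = 3 ∧
        ∃ b : Bool, ∀ p ∈ (P : Set (Fin 2 → ℝ)) ∩ (t + ·) '' (convexHull ℝ {A, B, C}),
          χ p = b := by
  refine ⟨P, A', B', C', cardP, affind, ?_⟩
  intro χ
  rcases colorKey (χ p1) (χ p2) (χ p3) (χ p4) (χ p5) (χ p6) (χ p7) (χ p8) (χ p9) with
    ⟨h1, h2⟩|⟨h1, h2⟩|⟨h1, h2⟩|⟨h1, h2⟩|⟨h1, h2⟩|⟨h1, h2⟩|⟨h1, h2⟩|⟨h1, h2⟩|⟨h1, h2⟩|⟨h1, h2⟩|⟨h1, h2⟩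
  · exact ⟨t0, finish t0 p1 p2 p4 edge0 ne_1_2 ne_1_4 ne_2_4 χ h1 h2⟩
  · exact ⟨t1, finish t1 p1 p3 p6 edge1 ne_1_3 ne_1_6 ne_3_6 χ h1 h2⟩
  · exact ⟨t2, finish t2 p2 p3 p6 edge2 ne_2_3 ne_2_6 ne_3_6 χ h1 h2⟩
  · exact ⟨t3, finish t3 p2 p3 p9 edge3 ne_2_3 ne_2_9 ne_3_9 χ h1 h2⟩
  · exact ⟨t4, finish t4 p2 p4 p8 edge4 ne_2_4 ne_2_8 ne_4_8 χ h1 h2⟩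
  · exact ⟨t5, finish t5 p3 p4 p8 edge5 ne_3_4 ne_3_8 ne_4_8 χ h1 h2⟩
  · exact ⟨t6, finish t6 p3 p4 p9 edge6 ne_3_4 ne_3_9 ne_4_9 χ h1 h2⟩
  · exact ⟨t7, finish t7 p4 p5 p7 edge7 ne_4_5 ne_4_7 ne_5_7 χ h1 h2⟩
  · exact ⟨t8, finish t8 p4 p6 p9 edge8 ne_4_6 ne_4_9 ne_6_9 χ h1 h2⟩
  · exact ⟨t9, finish t9 p5 p8 p9 edge9 ne_5_8 ne_5_9 ne_8_9 χ h1 h2⟩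
  · exact ⟨t10, finish t10 p7 p8 p9 edge10 ne_7_8 ne_7_9 ne_8_9 χ h1 h2⟩
end

section
/- There exists a nondegenerate triangle T in ℝ², a finite index set I, a family (t_i + T)_{i ∈ I} of translates of T, and a finite set S ⊆ ℝ² such that every point of S belongs to at least 3 of the sets t_i + T (counted with multiplicity of the index), yet for every partition of I into two sets I₁ and I₂ there exists a point of S that is not covered by any t_i + T with i ∈ I₁ or is not covered by any t_j + T with j ∈ I₂. In other words, there is an indecomposable 3-fold covering of a finite planar point set by translates of a triangle. -/
open Finset

noncomputable def TriA : Fin 2 → ℝ := ![0,0]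
noncomputable def TriB : Fin 2 → ℝ := ![1000,0]
noncomputable def TriC : Fin 2 → ℝ := ![0,1000]

lemma tri_hull_eq :
    convexHull ℝ ({TriA, TriB, TriC} : Set (Fin 2 → ℝ)) =
      {p : Fin 2 → ℝ | 0 ≤ p 0 ∧ 0 ≤ p 1 ∧ p 0 + p 1 ≤ 1000} := by
  apply le_antisymm
  · apply convexHull_min
    · rintro p hp
      rcases hp with rfl | rfl | rfl <;>
        refine ⟨?_, ?_, ?_⟩ <;> norm_num [TriA, TriB, TriC]
    · rintro x ⟨hx0, hx1, hx2⟩ y ⟨hy0, hy1, hy2⟩ a b ha hb hab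
      refine ⟨?_, ?_, ?_⟩ <;>
        simp only [Pi.add_apply, Pi.smul_apply, smul_eq_mul] <;> nlinarith
  · rintro p ⟨h0, h1, h2⟩
    rw [show ({TriA, TriB, TriC} : Set (Fin 2 → ℝ)) = insert TriA {TriB, TriC} from rfl,
      convexHull_insert ⟨TriB, by simp⟩, convexHull_pair]
    rw [mem_convexJoin]
    rcases eq_or_lt_of_le (by linarith : (0:ℝ) ≤ p 0 + p 1) with hs | hs
    · refine ⟨TriA, by simp, TriB, left_mem_segment ℝ _ _, ?_⟩
      have hp0 : p 0 = 0 := by linarith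
      have hp1 : p 1 = 0 := by linarith
      have : p = TriA := by
        funext i; fin_cases i <;> simp [TriA, hp0, hp1]
      rw [this]
      exact left_mem_segment ℝ _ _
    · set s : ℝ := p 0 + p 1 with hsdef
      refine ⟨TriA, by simp, (1000/s) • p,
        ⟨p 0 / s, p 1 / s, by positivity, by positivity, by field_simp; exact hsdef.symm, ?_⟩,
        ⟨1 - s/1000, s/1000, by nlinarith, by positivity, by ring, ?_⟩⟩
      · funext i; fin_cases i <;>
          · simp [TriB, TriC]
            field_simp
      · funext i
        have hA : TriA i = 0 := by fin_cases i <;> simp [TriA]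
        simp [hA]
        field_simp

def tvZ : Fin 9 → Fin 2 → ℤ :=
  ![![1020,0], ![220,140], ![300,560], ![1000,690], ![600,150],
    ![160,1090], ![470,170], ![150,920], ![1110,370]]

def pvZ : Fin 11 → Fin 2 → ℤ :=
  ![![1110,920], ![1000,690], ![1109,690], ![1020,150], ![1110,689],
    ![1020,920], ![600,1089], ![470,560], ![1110,1090], ![1020,370], ![300,1090]]

noncomputable def tv : Fin 9 → Fin 2 → ℝ := fun i j => (tvZ i j : ℝ)
noncomputable def pv : Fin 11 → Fin 2 → ℝ := fun k j => (pvZ k j : ℝ)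

def edg : Fin 11 → Fin 3 → Fin 9 :=
  ![![3,7,8], ![2,3,4], ![0,2,3], ![0,1,4], ![0,2,8], ![0,3,7],
    ![2,4,7], ![1,2,6], ![3,5,8], ![0,4,6], ![2,5,7]]

lemma key (k : Fin 11) (i : Fin 9) :
    (tvZ i 0 ≤ pvZ k 0 ∧ tvZ i 1 ≤ pvZ k 1 ∧
      pvZ k 0 + pvZ k 1 ≤ tvZ i 0 + tvZ i 1 + 1000) ↔
      (i = edg k 0 ∨ i = edg k 1 ∨ i = edg k 2) := by
  revert k i; decide

lemma mem_translate (t p : Fin 2 → ℝ) (s : Set (Fin 2 → ℝ)) :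
    p ∈ (t + ·) '' s ↔ p - t ∈ s := by
  constructor
  · rintro ⟨x, hx, rfl⟩; simpa using hx
  · intro h; exact ⟨p - t, h, by simp⟩

lemma incid (k : Fin 11) (i : Fin 9) :
    pv k ∈ (tv i + ·) '' (convexHull ℝ ({TriA, TriB, TriC} : Set (Fin 2 → ℝ))) ↔
      (i = edg k 0 ∨ i = edg k 1 ∨ i = edg k 2) := by
  rw [mem_translate, tri_hull_eq]
  have hkey : ((tvZ i 0 : ℝ) ≤ pvZ k 0 ∧ (tvZ i 1 : ℝ) ≤ pvZ k 1 ∧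
      (pvZ k 0 : ℝ) + pvZ k 1 ≤ (tvZ i 0 : ℝ) + tvZ i 1 + 1000) ↔
      (i = edg k 0 ∨ i = edg k 1 ∨ i = edg k 2) := by
    rw [← key k i]
    constructor
    · rintro ⟨h1, h2, h3⟩; exact ⟨by exact_mod_cast h1, by exact_mod_cast h2, by exact_mod_cast h3⟩
    · rintro ⟨h1, h2, h3⟩; exact ⟨by exact_mod_cast h1, by exact_mod_cast h2, by exact_mod_cast h3⟩
  rw [← hkey]
  simp only [Set.mem_setOf_eq, Pi.sub_apply, tv, pv]
  constructor
  · rintro ⟨h1, h2, h3⟩; exact ⟨by linarith, by linarith, by linarith⟩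
  · rintro ⟨h1, h2, h3⟩; exact ⟨by linarith, by linarith, by linarith⟩

set_option maxRecDepth 8000 in
lemma colorKey (f : Fin 9 → Bool) :
    ∃ k : Fin 11, (∀ j : Fin 3, f (edg k j) = true) ∨ (∀ j : Fin 3, f (edg k j) = false) := by
  revert f; decide

lemma tri_affineIndependent : AffineIndependent ℝ ![TriA, TriB, TriC] := by
  rw [affineIndependent_iff_not_collinear]
  intro hcol
  have hrange : Set.range ![TriA, TriB, TriC] = ({TriA, TriB, TriC} : Set _) := by
    ext x
    simp only [Matrix.range_cons, Matrix.range_empty, Set.union_empty, Set.mem_insert_iff,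
      Set.mem_union, Set.mem_singleton_iff]
  rw [hrange] at hcol
  obtain ⟨v, hv⟩ := (collinear_iff_of_mem (show TriA ∈ ({TriA, TriB, TriC} : Set _) by simp)).mp hcol
  obtain ⟨r, hr⟩ := hv TriB (by simp)
  obtain ⟨q, hq⟩ := hv TriC (by simp)
  have hr0 := congrFun hr 0
  have hr1 := congrFun hr 1
  have hq1 := congrFun hq 1
  simp [TriA, TriB, TriC] at hr0 hr1 hq1
  rcases hr1 with h | h
  · rw [h] at hr0; norm_num at hr0
  · rw [h] at hq1; norm_num at hq1

/-- There is an indecomposable 3-fold covering of a finite planar point set by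
finitely many translates of a nondegenerate triangle. -/
theorem indecomposable_threefold_triangle_covering :
    ∃ (A B C : Fin 2 → ℝ) (n : ℕ) (t : Fin n → (Fin 2 → ℝ)) (S : Finset (Fin 2 → ℝ)),
      AffineIndependent ℝ ![A, B, C] ∧
      (∀ p ∈ S, 3 ≤ {i : Fin n | p ∈ (t i + ·) '' (convexHull ℝ {A, B, C})}.ncard) ∧
      ∀ I₁ : Set (Fin n),
        (∃ p ∈ S, ∀ i ∈ I₁, p ∉ (t i + ·) '' (convexHull ℝ {A, B, C})) ∨
        (∃ p ∈ S, ∀ i ∈ I₁ᶜ, p ∉ (t i + ·) '' (convexHull ℝ {A, B, C})) := by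
  classical
  refine ⟨TriA, TriB, TriC, 9, tv, Finset.image pv Finset.univ, tri_affineIndependent, ?_, ?_⟩
  · intro p hp
    obtain ⟨k, -, rfl⟩ := Finset.mem_image.mp hp
    have hset : {i : Fin 9 | pv k ∈ (tv i + ·) '' (convexHull ℝ {TriA, TriB, TriC})} =
        ↑({edg k 0, edg k 1, edg k 2} : Finset (Fin 9)) := by
      ext i
      simp only [Set.mem_setOf_eq, incid k i, Finset.coe_insert, Set.mem_insert_iff,
        Finset.coe_singleton, Set.mem_singleton_iff]
    rw [hset, Set.ncard_coe_finset]
    have h3 : ∀ k : Fin 11, 3 ≤ ({edg k 0, edg k 1, edg k 2} : Finset (Fin 9)).card := by decide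
    exact h3 k
  · intro I₁
    obtain ⟨k, hk | hk⟩ := colorKey (fun i => decide (i ∈ I₁))
    · right
      refine ⟨pv k, Finset.mem_image_of_mem _ (Finset.mem_univ k), ?_⟩
      intro i hi hmem
      rcases (incid k i).mp hmem with rfl | rfl | rfl
      · exact hi (of_decide_eq_true (hk 0))
      · exact hi (of_decide_eq_true (hk 1))
      · exact hi (of_decide_eq_true (hk 2))
    · left
      refine ⟨pv k, Finset.mem_image_of_mem _ (Finset.mem_univ k), ?_⟩
      intro i hi hmem
      rcases (incid k i).mp hmem with rfl | rfl | rfl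
      · exact of_decide_eq_false (hk 0) hi
      · exact of_decide_eq_false (hk 1) hi
      · exact of_decide_eq_false (hk 2) hi
end
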